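/- Suppose in addition that f(x) → 0 as x → −∞ and as x → +∞. Define M(x) = x + (2F(x) − 1)/f(x). Then M is continuous and strictly increasing on ℝ, M → −∞ at −∞ and M → +∞ at +∞; hence for every s ∈ ℝ there exists a unique x*(s) with M(x*(s)) + s = 0 (equivalently x* = (1 − 2F(x*))/f(x*) − s). Moreover x*(0) = 0, and x*(s) < 0 whenever s > 0. -/

import Mathlib

/-- Suppose in addition that `f → 0` at `±∞`. Define
`M x = x + (2 F x − 1)/f x`. Then `M` is continuous and strictly
increasing on `ℝ`, `M → −∞` at `−∞` and `M → +∞` at `+∞`; hence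
for every `s` there is a unique `x*` with `M x* + s = 0`. Moreover
the solution at `s = 0` is `0` (i.e. `M 0 = 0`), and the solution is
negative whenever `s > 0`. -/
theorem switching_cost_equilibrium_exists (F f : ℝ → ℝ)
    (hF_deriv : ∀ x, HasDerivAt F (f x) x)
    (hf_cont : Continuous f)
    (hf_pos : ∀ x, 0 < f x)
    (hf_symm : ∀ x, f (-x) = f x)
    (hF_mono : Monotone F)
    (hF_bot : Filter.Tendsto F Filter.atBot (nhds 0))
    (hF_top : Filter.Tendsto F Filter.atTop (nhds 1))
    (hMHR : StrictMono (fun x => F x / f x))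
    (hf_bot : Filter.Tendsto f Filter.atBot (nhds 0))
    (hf_top : Filter.Tendsto f Filter.atTop (nhds 0))
    (M : ℝ → ℝ)
    (hM : ∀ x, M x = x + (2 * F x - 1) / f x) :
    Continuous M ∧ StrictMono M ∧
    Filter.Tendsto M Filter.atBot Filter.atBot ∧
    Filter.Tendsto M Filter.atTop Filter.atTop ∧
    (∀ s : ℝ, ∃! x : ℝ, M x + s = 0) ∧
    M 0 = 0 ∧
    (∀ s : ℝ, 0 < s → ∀ x : ℝ, M x + s = 0 → x < 0) := by
  have hF_cont : Continuous F :=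
    continuous_iff_continuousAt.mpr fun x => (hF_deriv x).continuousAt
  -- F x + F (-x) is constant
  have hd : ∀ x, HasDerivAt (fun x => F x + F (-x)) 0 x := by
    intro x
    have h2 : HasDerivAt (fun x => F (-x)) (f (-x) * (-1)) x :=
      (hF_deriv (-x)).comp x (hasDerivAt_neg x)
    have := (hF_deriv x).add h2
    rw [hf_symm x] at this
    rwa [show f x + f x * (-1) = 0 by ring] at this
  have hconst : ∀ x, F x + F (-x) = F 0 + F 0 := by
    intro x
    have := is_const_of_deriv_eq_zero (f := fun x => F x + F (-x))
      (fun x => (hd x).differentiableAt) (fun x => (hd x).deriv) x 0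
    simpa using this
  have hsum : F 0 + F 0 = 1 := by
    have h1 : Filter.Tendsto (fun x => F x + F (-x)) Filter.atTop (nhds (1 + 0)) :=
      hF_top.add (hF_bot.comp Filter.tendsto_neg_atTop_atBot)
    have h2 : Filter.Tendsto (fun x => F x + F (-x)) Filter.atTop (nhds (F 0 + F 0)) := by
      simp only [hconst]
      exact tendsto_const_nhds
    have := tendsto_nhds_unique h2 h1
    linarith
  have hF0 : F 0 = 1 / 2 := by linarith
  have hFneg : ∀ x, F (-x) = 1 - F x := by
    intro x; have := hconst x; linarith
  set g : ℝ → ℝ := fun x => F x / f x with hg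
  have hkey : ∀ x, (2 * F x - 1) / f x = g x - g (-x) := by
    intro x
    show (2 * F x - 1) / f x = F x / f x - F (-x) / f (-x)
    rw [hFneg x, hf_symm x, div_sub_div_same]
    congr 1
    ring
  have hMg : ∀ x, M x = x + (g x - g (-x)) := by
    intro x; rw [hM x, hkey x]
  -- strict monotonicity
  have hMono : StrictMono M := by
    intro a b hab
    rw [hMg a, hMg b]
    have h1 : g a < g b := hMHR hab
    have h2 : g (-b) < g (-a) := hMHR (by linarith)
    linarith
  -- continuity
  have hCont : Continuous M := by
    have : M = fun x => x + (2 * F x - 1) / f x := funext hM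
    rw [this]
    exact continuous_id.add (((continuous_const.mul hF_cont).sub continuous_const).div
      hf_cont fun x => (hf_pos x).ne')
  -- M x ≥ x for x ≥ 0, M x ≤ x for x ≤ 0
  have hge : ∀ x : ℝ, 0 ≤ x → x ≤ M x := by
    intro x hx
    rw [hMg x]
    have : g (-x) ≤ g x := hMHR.monotone (by linarith)
    linarith
  have hle : ∀ x : ℝ, x ≤ 0 → M x ≤ x := by
    intro x hx
    rw [hMg x]
    have : g x ≤ g (-x) := hMHR.monotone (by linarith)
    linarith
  have hTop : Filter.Tendsto M Filter.atTop Filter.atTop := by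
    apply Filter.tendsto_atTop_mono' _ _ Filter.tendsto_id
    filter_upwards [Filter.eventually_ge_atTop (0 : ℝ)] with x hx
    exact hge x hx
  have hBot : Filter.Tendsto M Filter.atBot Filter.atBot := by
    apply Filter.tendsto_atBot_mono' _ _ Filter.tendsto_id
    filter_upwards [Filter.eventually_le_atBot (0 : ℝ)] with x hx
    exact hle x hx
  have hM0 : M 0 = 0 := by
    rw [hM 0, hF0]
    norm_num
  refine ⟨hCont, hMono, hBot, hTop, ?_, hM0, ?_⟩
  · intro s
    obtain ⟨x, hx⟩ := hCont.surjective hTop hBot (-s)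
    refine ⟨x, by show M x + s = 0; rw [hx]; ring, fun y hy => hMono.injective ?_⟩
    simp only at hy
    rw [hx]; linarith
  · intro s hs x hx
    have : M x < M 0 := by rw [hM0]; linarith
    exact hMono.lt_iff_lt.mp this
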